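/- Let a_1,…,a_n be nonzero real numbers and b∈ℝ. If X_1,…,X_n are i.i.d. uniform on {-1,1}, then P(|Σ a_i X_i − b| < min_k |a_k|) ≤ 2^{-n}·C(n,⌊n/2⌋), where C(n,k) is the binomial coefficient. -/

import Mathlib

/-- Map a Boolean bit to ±1 ∈ ℝ (true ↦ 1, false ↦ -1). -/
def toR (b : Bool) : ℝ := if b then 1 else -1

lemma toR_term (a : ℝ) (ha : a ≠ 0) (u : Bool) :
    a * toR u = if u = decide (0 < a) then |a| else -|a| := by
  rcases ha.lt_or_gt with h | h <;> cases u <;>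
    simp [toR, h, h.not_gt, abs_of_pos, abs_of_neg]

lemma sum_toR {n : ℕ} (a : Fin n → ℝ) (ha : ∀ i, a i ≠ 0) (x : Fin n → Bool) :
    ∑ i, a i * toR (x i) =
      2 * ∑ i ∈ Finset.univ.filter (fun i => x i = decide (0 < a i)), |a i|
        - ∑ i, |a i| := by
  have h1 : ∑ i, a i * toR (x i)
      = ∑ i, (if x i = decide (0 < a i) then |a i| else -|a i|) := by
    exact Finset.sum_congr rfl fun i _ => toR_term (a i) (ha i) (x i)
  rw [h1, Finset.sum_ite]
  have h2 : ∑ i, |a i|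
      = ∑ i ∈ Finset.univ.filter (fun i => x i = decide (0 < a i)), |a i|
        + ∑ i ∈ Finset.univ.filter (fun i => ¬ x i = decide (0 < a i)), |a i| :=
    (Finset.sum_filter_add_sum_filter_not _ _ _).symm
  rw [Finset.sum_neg_distrib]
  linarith

/-- Sperner/Littlewood–Offord bound: for nonzero reals a_1,…,a_n and b ∈ ℝ,
with X_1,…,X_n i.i.d. uniform on {-1,1},
P(|Σ a_i X_i − b| < min_k |a_k|) ≤ 2^{-n}·C(n,⌊n/2⌋). -/
theorem littlewood_offord_sperner {n : ℕ} (hn : 0 < n)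
    (a : Fin n → ℝ) (ha : ∀ i, a i ≠ 0) (b : ℝ) :
    ((Finset.univ.filter fun x : Fin n → Bool =>
        |(∑ i, a i * toR (x i)) - b| <
          Finset.univ.inf' (Finset.univ_nonempty_iff.mpr ⟨⟨0, hn⟩⟩) (fun i => |a i|)).card : ℝ)
        / 2 ^ n
      ≤ (n.choose (n / 2) : ℝ) / 2 ^ n := by
  classical
  set m := Finset.univ.inf' (Finset.univ_nonempty_iff.mpr ⟨⟨0, hn⟩⟩) (fun i => |a i|) with hm
  set A := Finset.univ.filter fun x : Fin n → Bool =>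
      |(∑ i, a i * toR (x i)) - b| < m with hA
  set f : (Fin n → Bool) → Finset (Fin n) :=
      fun x => Finset.univ.filter (fun i => x i = decide (0 < a i)) with hf
  have hfinj : Set.InjOn f A := by
    intro x _ y _ hxy
    funext i
    have : (x i = decide (0 < a i)) ↔ (y i = decide (0 < a i)) := by
      constructor <;> intro h
      · have : i ∈ f x := by simp [hf, h]
        rw [hxy] at this; simpa [hf] using this
      · have : i ∈ f y := by simp [hf, h]
        rw [← hxy] at this; simpa [hf] using this
    cases hd : decide (0 < a i) <;> rw [hd] at this <;>
      cases hx : x i <;> cases hy : y i <;> simp [hx, hy] at this ⊢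
  have hanti : IsAntichain (· ⊆ ·) ((A.image f : Finset (Finset (Fin n))) : Set (Finset (Fin n))) := by
    rintro S hS T hT hST hsub
    simp only [Finset.coe_image, Set.mem_image] at hS hT
    obtain ⟨x, hx, rfl⟩ := hS
    obtain ⟨y, hy, rfl⟩ := hT
    obtain ⟨i, hiT, hiS⟩ := Finset.exists_of_ssubset (lt_of_le_of_ne hsub hST)
    have hxA : |(∑ i, a i * toR (x i)) - b| < m := by
      have := hx; rw [Finset.mem_coe, hA, Finset.mem_filter] at this; exact this.2
    have hyA : |(∑ i, a i * toR (y i)) - b| < m := by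
      have := hy; rw [Finset.mem_coe, hA, Finset.mem_filter] at this; exact this.2
    have hsumx := sum_toR a ha x
    have hsumy := sum_toR a ha y
    have hle : ∑ j ∈ f x, |a j| + |a i| ≤ ∑ j ∈ f y, |a j| := by
      have h1 : ∑ j ∈ f x, |a j| + ∑ j ∈ f y \ f x, |a j| = ∑ j ∈ f y, |a j| := by
        rw [add_comm]; exact Finset.sum_sdiff hsub
      have h2 : |a i| ≤ ∑ j ∈ f y \ f x, |a j| :=
        Finset.single_le_sum (fun j _ => abs_nonneg (a j)) (Finset.mem_sdiff.mpr ⟨hiT, hiS⟩)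
      linarith
    have hmi : m ≤ |a i| := Finset.inf'_le _ (Finset.mem_univ i)
    have h1 := abs_lt.mp hxA
    have h2 := abs_lt.mp hyA
    have : (∑ j, a j * toR (y j)) - (∑ j, a j * toR (x j)) ≥ 2 * m := by
      rw [hsumx, hsumy]; linarith
    linarith [h1.1, h1.2, h2.1, h2.2]
  have hcard : (A.image f).card = A.card := Finset.card_image_of_injOn hfinj
  have hsp := IsAntichain.sperner hanti
  rw [hcard] at hsp
  have : (A.card : ℝ) ≤ (n.choose (n / 2) : ℝ) := by
    exact_mod_cast by simpa [Fintype.card_fin] using hsp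
  gcongr
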